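/- Let F be a finite-dimensional Hilbert space, and let Φ, Ψ : 𝔻 → B(F) be analytic functions satisfying Φ(z)Ψ(z) = zI = Ψ(z)Φ(z) for all z in the open unit disc. If (z̄₁, z̄₂) ∈ 𝔻² is a joint eigenvalue of (M_Φ*, M_Ψ*) on the vector-valued Hardy space H²(F), then (z₁, z₂) is a joint eigenvalue of the commuting pair of matrices (Φ(z₁z₂), Ψ(z₁z₂)), and conversely. -/

import Mathlib

open ContinuousLinearMap

noncomputable section

/-- The vector-valued Hardy space `H²(F)` modelled as the `ℓ²`-space of Taylor
coefficients. -/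
abbrev HardyH2 (n : ℕ) := lp (fun _ : ℕ => EuclideanSpace ℂ (Fin n)) 2

/-- Evaluation of an element of `H²(F)` at a point of the open unit disc. -/
def evalH2 {n : ℕ} (f : HardyH2 n) (z : ℂ) : EuclideanSpace ℂ (Fin n) :=
  ∑' k : ℕ, z ^ k • (f k)

section Aux

open scoped InnerProductSpace ComplexConjugate ENNReal NNReal

section Coeffs

variable {E : Type*} [NormedAddCommGroup E] [NormedSpace ℂ E] [CompleteSpace E]

/-- Summability of `z ^ k • c k` for bounded `c` and `‖z‖ < 1`. -/
lemma summable_pow_smul {c : ℕ → E} {M : ℝ} (hM : ∀ k, ‖c k‖ ≤ M) {z : ℂ}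
    (hz : ‖z‖ < 1) : Summable fun k => z ^ k • c k := by
  refine Summable.of_norm_bounded
    ((summable_geometric_of_lt_one (norm_nonneg z) hz).mul_right M) (fun k => ?_)
  rw [norm_smul, norm_pow]
  exact mul_le_mul_of_nonneg_left (hM k) (by positivity)

lemma head_eq_zero_of_tsum_eq_zero {c : ℕ → E} {M : ℝ} (hM : ∀ k, ‖c k‖ ≤ M)
    (h : ∀ z : ℂ, z ≠ 0 → ‖z‖ < 1 / 2 → ∑' k, z ^ k • c k = 0) : c 0 = 0 := by
  have hM0 : 0 ≤ M := le_trans (norm_nonneg _) (hM 0)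
  have key : ∀ z : ℂ, z ≠ 0 → ‖z‖ < 1 / 2 → ‖c 0‖ ≤ ‖z‖ * (2 * M) := by
    intro z hz0 hz
    have hz1 : ‖z‖ < 1 := by linarith
    have hsum := summable_pow_smul hM hz1
    have hsplit := (hsum.tsum_eq_zero_add)
    rw [h z hz0 hz, pow_zero, one_smul] at hsplit
    have : c 0 = -∑' k, z ^ (k + 1) • c (k + 1) := by
      rw [eq_neg_iff_add_eq_zero]; linear_combination (norm := abel) hsplit.symm
    rw [this, norm_neg]
    have hg : Summable fun k => ‖z‖ ^ (k + 1) * M := by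
      have : (fun k => ‖z‖ ^ (k + 1) * M) = fun k => ‖z‖ * (‖z‖ ^ k * M) := by
        ext k; ring
      rw [this]
      exact ((summable_geometric_of_lt_one (norm_nonneg z) hz1).mul_right M).mul_left _
    calc ‖∑' k, z ^ (k + 1) • c (k + 1)‖
        ≤ ∑' k, ‖z‖ ^ (k + 1) * M := by
          refine tsum_of_norm_bounded hg.hasSum (fun k => ?_)
          rw [norm_smul, norm_pow]
          exact mul_le_mul_of_nonneg_left (hM _) (by positivity)
      _ = ‖z‖ * (M * ∑' k, ‖z‖ ^ k) := by
          rw [← tsum_mul_left, ← tsum_mul_left]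
          congr 1; ext k; ring
      _ ≤ ‖z‖ * (2 * M) := by
          rw [tsum_geometric_of_lt_one (norm_nonneg z) hz1]
          have h1 : (1 - ‖z‖)⁻¹ ≤ 2 := by
            rw [inv_le_comm₀ (by linarith) (by norm_num)]
            linarith
          have := mul_le_mul_of_nonneg_left h1 hM0
          nlinarith [norm_nonneg z]
  have : ‖c 0‖ ≤ 0 := by
    refine le_of_forall_pos_le_add (fun ε hε => ?_)
    set t : ℝ := min (ε / (2 * M + 1)) (1 / 4) with ht
    have ht0 : 0 < t := lt_min (by positivity) (by norm_num)
    have hz0 : (t : ℂ) ≠ 0 := by exact_mod_cast ht0.ne'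
    have hzn : ‖(t : ℂ)‖ < 1 / 2 := by
      rw [Complex.norm_real, Real.norm_of_nonneg ht0.le]
      calc t ≤ 1 / 4 := min_le_right _ _
        _ < 1 / 2 := by norm_num
    have := key t hz0 hzn
    rw [Complex.norm_real, Real.norm_of_nonneg ht0.le] at this
    have h2 : t * (2 * M) ≤ ε := by
      have h3 : t ≤ ε / (2 * M + 1) := min_le_left _ _
      calc t * (2 * M) ≤ (ε / (2 * M + 1)) * (2 * M + 1) := by
            apply mul_le_mul h3 (by linarith) (by linarith) (by positivity)
        _ = ε := by field_simp
    linarith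
  simpa using norm_le_zero_iff.1 this

/-- Uniqueness of Taylor coefficients, punctured-ball version. -/
lemma coeff_eq_zero_of_tsum_eq_zero {c : ℕ → E} {M : ℝ} (hM : ∀ k, ‖c k‖ ≤ M)
    (h : ∀ z : ℂ, z ≠ 0 → ‖z‖ < 1 / 2 → ∑' k, z ^ k • c k = 0) : ∀ k, c k = 0 := by
  intro k
  induction k generalizing c with
  | zero => exact head_eq_zero_of_tsum_eq_zero hM h
  | succ k ih =>
    have h0 : c 0 = 0 := head_eq_zero_of_tsum_eq_zero hM h
    refine ih (c := fun j => c (j + 1)) (fun j => hM (j + 1)) (fun z hz0 hz => ?_)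
    have hz1 : ‖z‖ < 1 := by linarith
    have hsum := summable_pow_smul hM hz1
    have hsplit := (hsum.tsum_eq_zero_add)
    rw [h z hz0 hz, pow_zero, one_smul, h0, zero_add] at hsplit
    have heq : ∀ j : ℕ, z ^ j • c (j + 1) = z⁻¹ • (z ^ (j + 1) • c (j + 1)) := by
      intro j
      rw [smul_smul, pow_succ']
      rw [← mul_assoc, inv_mul_cancel₀ hz0, one_mul]
    calc ∑' j, z ^ j • c (j + 1) = ∑' j, z⁻¹ • (z ^ (j + 1) • c (j + 1)) := by
          exact tsum_congr heq
      _ = z⁻¹ • ∑' j, z ^ (j + 1) • c (j + 1) := by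
          exact Summable.tsum_const_smul (z⁻¹) ((summable_nat_add_iff 1).2 hsum)
      _ = 0 := by rw [← hsplit, smul_zero]

end Coeffs

section LinAlg

variable {F : Type*} [NormedAddCommGroup F] [InnerProductSpace ℂ F] [FiniteDimensional ℂ F]

/-- If `A` has eigenvalue `lam`, then `A†` has eigenvalue `conj lam`. -/
lemma exists_adjoint_eigvec {A : F →L[ℂ] F} {lam : ℂ} {v : F} (hv : v ≠ 0)
    (hAv : A v = lam • v) : ∃ x : F, x ≠ 0 ∧ adjoint A x = conj lam • x := by
  have hc : CompleteSpace F := FiniteDimensional.complete ℂ F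
  set T : F →ₗ[ℂ] F := (adjoint A : F →L[ℂ] F) - conj lam • (1 : F →L[ℂ] F) with hT
  by_cases hker : ∀ x : F, T x = 0 → x = 0
  · exfalso
    have hinj : Function.Injective T := by
      rw [← LinearMap.ker_eq_bot, LinearMap.ker_eq_bot']
      intro m hm
      exact hker m hm
    have hsurj : Function.Surjective T := LinearMap.injective_iff_surjective.1 hinj
    obtain ⟨y, hy⟩ := hsurj v
    have : (⟪v, v⟫_ℂ : ℂ) = 0 := by
      calc (⟪v, v⟫_ℂ : ℂ) = ⟪T y, v⟫_ℂ := by rw [hy]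
        _ = ⟪adjoint A y, v⟫_ℂ - ⟪conj lam • y, v⟫_ℂ := by
            simp [hT, inner_sub_left]
        _ = ⟪y, A v⟫_ℂ - lam * ⟪y, v⟫_ℂ := by
            rw [adjoint_inner_left, inner_smul_left]; simp [mul_comm]
        _ = 0 := by rw [hAv, inner_smul_right]; ring
    exact hv (inner_self_eq_zero.1 this)
  · push_neg at hker
    obtain ⟨x, hx0, hx⟩ := hker
    refine ⟨x, hx, ?_⟩
    have : T x = 0 := hx0
    rw [hT] at this
    simp only [LinearMap.sub_apply] at this
    have h2 : adjoint A x - conj lam • x = 0 := by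
      simpa using this
    exact sub_eq_zero.1 h2

lemma adjoint_smul_one (c : ℂ) :
    adjoint ((c : ℂ) • (1 : F →L[ℂ] F)) = conj c • (1 : F →L[ℂ] F) := by
  have hc : CompleteSpace F := FiniteDimensional.complete ℂ F
  ext x
  refine ext_inner_right ℂ (fun y => ?_)
  rw [adjoint_inner_left]
  simp [inner_smul_left, inner_smul_right]

lemma joint_adjoint_eig {A B : F →L[ℂ] F} {z₁ z₂ : ℂ}
    (hAB : A ∘L B = (z₁ * z₂) • 1) (hBA : B ∘L A = (z₁ * z₂) • 1)
    {v : F} (hv : v ≠ 0) (h1 : A v = z₁ • v) (h2 : B v = z₂ • v) :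
    ∃ x : F, x ≠ 0 ∧ adjoint A x = conj z₁ • x ∧ adjoint B x = conj z₂ • x := by
  have hc : CompleteSpace F := FiniteDimensional.complete ℂ F
  by_cases hz1 : z₁ ≠ 0
  · obtain ⟨x, hx, hAx⟩ := exists_adjoint_eigvec hv h1
    refine ⟨x, hx, hAx, ?_⟩
    have key : adjoint B (adjoint A x) = conj (z₁ * z₂) • x := by
      rw [← comp_apply, ← adjoint_comp, hAB, adjoint_smul_one]
      simp
    rw [hAx, map_smul] at key
    have hz1' : conj z₁ ≠ 0 := by simpa using hz1
    apply smul_right_injective F hz1'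
    show conj z₁ • adjoint B x = conj z₁ • (conj z₂ • x)
    rw [key, smul_smul, ← map_mul]
  · push_neg at hz1
    subst hz1
    by_cases hz2 : z₂ ≠ 0
    · obtain ⟨x, hx, hBx⟩ := exists_adjoint_eigvec hv h2
      refine ⟨x, hx, ?_, hBx⟩
      have key : adjoint A (adjoint B x) = conj (0 * z₂) • x := by
        rw [← comp_apply, ← adjoint_comp, hBA, adjoint_smul_one]
        simp
      rw [hBx, map_smul] at key
      have hz2' : conj z₂ ≠ 0 := by simpa using hz2
      have key0 : conj z₂ • adjoint A x = 0 := by rw [key]; simp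
      rcases smul_eq_zero.1 key0 with h | h
      · exact absurd h hz2'
      · rw [h]; simp
    · push_neg at hz2
      subst hz2
      simp only [map_zero, zero_smul]
      have hAv : A v = 0 := by simpa using h1
      have hBv : B v = 0 := by simpa using h2
      have hAB0 : A ∘L B = 0 := by simpa using hAB
      have hBA0 : B ∘L A = 0 := by simpa using hBA
      set A' : F →ₗ[ℂ] F := (adjoint A).toLinearMap with hA'
      set B' : F →ₗ[ℂ] F := (adjoint B).toLinearMap with hB'
      by_cases hK : LinearMap.ker A' ⊓ LinearMap.ker B' = ⊥
      · exfalso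
        have hA'B' : ∀ y, A' (B' y) = 0 := by
          intro y
          show adjoint A (adjoint B y) = 0
          rw [← comp_apply, ← adjoint_comp, hBA0]
          simp
        have hB'A' : ∀ y, B' (A' y) = 0 := by
          intro y
          show adjoint B (adjoint A y) = 0
          rw [← comp_apply, ← adjoint_comp, hAB0]
          simp
        have hinf : LinearMap.range A' ⊓ LinearMap.range B' = ⊥ := by
          rw [eq_bot_iff]
          rintro u ⟨⟨a, ha⟩, ⟨b, hb⟩⟩
          have hu1 : A' u = 0 := by rw [← hb]; exact hA'B' b
          have hu2 : B' u = 0 := by rw [← ha]; exact hB'A' a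
          have : u ∈ LinearMap.ker A' ⊓ LinearMap.ker B' := ⟨hu1, hu2⟩
          rwa [hK] at this
        have e1 := LinearMap.finrank_range_add_finrank_ker A'
        have e2 := LinearMap.finrank_range_add_finrank_ker B'
        have e3 := Submodule.finrank_sup_add_finrank_inf_eq
          (LinearMap.ker A') (LinearMap.ker B')
        have e4 := Submodule.finrank_sup_add_finrank_inf_eq
          (LinearMap.range A') (LinearMap.range B')
        rw [hK] at e3
        rw [hinf] at e4
        have e5 : Module.finrank ℂ (LinearMap.ker A' ⊔ LinearMap.ker B' : Submodule ℂ F)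
            ≤ Module.finrank ℂ F := Submodule.finrank_le _
        have e6 : Module.finrank ℂ (LinearMap.range A' ⊔ LinearMap.range B' : Submodule ℂ F)
            ≤ Module.finrank ℂ F := Submodule.finrank_le _
        have e7 : Module.finrank ℂ (LinearMap.range A' ⊔ LinearMap.range B' : Submodule ℂ F)
            = Module.finrank ℂ F := by
          simp only [finrank_bot, add_zero] at e3 e4
          omega
        have htop : LinearMap.range A' ⊔ LinearMap.range B' = ⊤ :=
          Submodule.eq_top_of_finrank_eq e7
        have hvmem : v ∈ LinearMap.range A' ⊔ LinearMap.range B' := by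
          rw [htop]; trivial
        obtain ⟨a, ha, b, hb, hab⟩ := Submodule.mem_sup.1 hvmem
        obtain ⟨a', rfl⟩ := ha
        obtain ⟨b', rfl⟩ := hb
        have : (⟪v, v⟫_ℂ : ℂ) = 0 := by
          calc (⟪v, v⟫_ℂ : ℂ) = ⟪A' a' + B' b', v⟫_ℂ := by rw [hab]
            _ = ⟪adjoint A a', v⟫_ℂ + ⟪adjoint B b', v⟫_ℂ := by rw [inner_add_left]; rfl
            _ = ⟪a', A v⟫_ℂ + ⟪b', B v⟫_ℂ := by rw [adjoint_inner_left, adjoint_inner_left]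
            _ = 0 := by rw [hAv, hBv, inner_zero_right, inner_zero_right, add_zero]
        exact hv (inner_self_eq_zero.1 this)
      · obtain ⟨x, hxmem, hx⟩ := Submodule.exists_mem_ne_zero_of_ne_bot hK
        obtain ⟨hx1, hx2⟩ := hxmem
        exact ⟨x, hx, hx1, hx2⟩

end LinAlg

section Hardy

variable {n : ℕ}

lemma coeff_bound (f : HardyH2 n) (k : ℕ) : ‖f k‖ ≤ ‖f‖ :=
  lp.norm_apply_le_norm (by norm_num) f k

lemma summable_eval (f : HardyH2 n) {z : ℂ} (hz : ‖z‖ < 1) :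
    Summable fun k => z ^ k • (f k : EuclideanSpace ℂ (Fin n)) :=
  summable_pow_smul (coeff_bound f) hz

/-- The Szegő-kernel-type element `k_w ⊗ x` of the Hardy space. -/
def kernElem (w : ℂ) (hw : ‖w‖ < 1) (x : EuclideanSpace ℂ (Fin n)) : HardyH2 n :=
  ⟨fun k => (conj w) ^ k • x, by
    apply memℓp_gen
    have h2 : (2 : ℝ≥0∞).toReal = 2 := by norm_num
    rw [h2]
    have key : (fun k : ℕ => ‖(conj w) ^ k • x‖ ^ ((2:ℕ):ℝ))
        = fun k => (‖w‖ ^ 2) ^ k * ‖x‖ ^ 2 := by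
      ext k
      rw [Real.rpow_natCast, norm_smul, norm_pow, RCLike.norm_conj]
      ring
    have h3 : ((2:ℝ)) = ((2:ℕ):ℝ) := by norm_num
    rw [h3, key]
    have hw2 : ‖w‖ ^ 2 < 1 := pow_lt_one₀ (norm_nonneg w) hw two_ne_zero
    exact (summable_geometric_of_lt_one (by positivity) hw2).mul_right _⟩

lemma kernElem_apply (w : ℂ) (hw : ‖w‖ < 1) (x : EuclideanSpace ℂ (Fin n)) (k : ℕ) :
    (kernElem w hw x) k = (conj w) ^ k • x := rfl

lemma inner_kernElem (w : ℂ) (hw : ‖w‖ < 1) (x : EuclideanSpace ℂ (Fin n))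
    (g : HardyH2 n) : ⟪kernElem w hw x, g⟫_ℂ = ⟪x, evalH2 g w⟫_ℂ := by
  rw [lp.inner_eq_tsum]
  have h1 : ∀ k : ℕ, ⟪(kernElem w hw x) k, g k⟫_ℂ = ⟪x, w ^ k • g k⟫_ℂ := by
    intro k
    rw [kernElem_apply, inner_smul_left, inner_smul_right, map_pow, Complex.conj_conj]
  rw [tsum_congr h1, evalH2]
  exact ((innerSL ℂ x).map_tsum (summable_eval g hw)).symm

lemma kernElem_smul (w : ℂ) (hw : ‖w‖ < 1) (a : ℂ) (x : EuclideanSpace ℂ (Fin n)) :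
    kernElem w hw (a • x) = a • kernElem w hw x := by
  apply lp.ext
  funext k
  rw [lp.coeFn_smul]
  show (conj w) ^ k • (a • x) = a • ((conj w) ^ k • x)
  rw [smul_comm]

lemma mem_ball_of_norm {w : ℂ} (hw : ‖w‖ < 1) : w ∈ Metric.ball (0 : ℂ) 1 :=
  mem_ball_zero_iff.2 hw

lemma adjoint_apply_kernElem
    (Φ : ℂ → (EuclideanSpace ℂ (Fin n) →L[ℂ] EuclideanSpace ℂ (Fin n)))
    (M : HardyH2 n →L[ℂ] HardyH2 n)
    (hM : ∀ f : HardyH2 n, ∀ z ∈ Metric.ball (0 : ℂ) 1,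
      evalH2 (M f) z = Φ z (evalH2 f z))
    {w : ℂ} (hw : ‖w‖ < 1) (x : EuclideanSpace ℂ (Fin n)) :
    adjoint M (kernElem w hw x) = kernElem w hw (adjoint (Φ w) x) := by
  refine ext_inner_right ℂ (fun g => ?_)
  rw [adjoint_inner_left, inner_kernElem, inner_kernElem,
    hM g w (mem_ball_of_norm hw), ← adjoint_inner_left]

lemma evalH2_single (k : ℕ) (u : EuclideanSpace ℂ (Fin n)) (z : ℂ) :
    evalH2 (lp.single 2 k u) z = z ^ k • u := by
  rw [evalH2]
  rw [tsum_eq_single k (fun j hj => ?_)]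
  · rw [lp.single_apply_self]
  · rw [lp.single_apply_ne _ _ _ hj, smul_zero]

lemma evalH2_sub (f g : HardyH2 n) {z : ℂ} (hz : ‖z‖ < 1) :
    evalH2 (f - g) z = evalH2 f z - evalH2 g z := by
  rw [evalH2, evalH2, evalH2, ← (summable_eval f hz).tsum_sub (summable_eval g hz)]
  apply tsum_congr
  intro k
  rw [lp.coeFn_sub, Pi.sub_apply, smul_sub]

lemma eq_of_evalH2_eq {f g : HardyH2 n}
    (h : ∀ z : ℂ, ‖z‖ < 1 → evalH2 f z = evalH2 g z) : f = g := by
  have hd : ∀ k, (f - g) k = 0 := by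
    refine coeff_eq_zero_of_tsum_eq_zero (coeff_bound (f - g)) (fun z hz0 hz => ?_)
    have hz1 : ‖z‖ < 1 := by linarith
    show evalH2 (f - g) z = 0
    rw [evalH2_sub f g hz1, h z hz1, sub_self]
  apply lp.ext
  funext k
  have := hd k
  rw [lp.coeFn_sub, Pi.sub_apply] at this
  exact sub_eq_zero.1 this

end Hardy

end Aux

open scoped InnerProductSpace ComplexConjugate

set_option maxHeartbeats 2000000 in
/-- For analytic `Φ, Ψ : 𝔻 → B(F)` with `Φ(z)Ψ(z) = zI = Ψ(z)Φ(z)`, a point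
`(z̄₁, z̄₂) ∈ 𝔻²` is a joint eigenvalue of `(M_Φ*, M_Ψ*)` on `H²(F)` if and only if
`(z₁, z₂)` is a joint eigenvalue of `(Φ(z₁z₂), Ψ(z₁z₂))`. -/
theorem joint_eigenvalue_multipliers {n : ℕ}
    (Φ Ψ : ℂ → (EuclideanSpace ℂ (Fin n) →L[ℂ] EuclideanSpace ℂ (Fin n)))
    (hΦa : DifferentiableOn ℂ Φ (Metric.ball 0 1))
    (hΨa : DifferentiableOn ℂ Ψ (Metric.ball 0 1))
    (hprod : ∀ z ∈ Metric.ball (0 : ℂ) 1,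
      Φ z ∘L Ψ z = z • (1 : EuclideanSpace ℂ (Fin n) →L[ℂ] EuclideanSpace ℂ (Fin n)) ∧
      Ψ z ∘L Φ z = z • 1)
    (MΦ MΨ : HardyH2 n →L[ℂ] HardyH2 n)
    (hMΦ : ∀ f : HardyH2 n, ∀ z ∈ Metric.ball (0 : ℂ) 1,
      evalH2 (MΦ f) z = Φ z (evalH2 f z))
    (hMΨ : ∀ f : HardyH2 n, ∀ z ∈ Metric.ball (0 : ℂ) 1,
      evalH2 (MΨ f) z = Ψ z (evalH2 f z))
    (z₁ z₂ : ℂ) (hz₁ : ‖z₁‖ < 1) (hz₂ : ‖z₂‖ < 1) :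
    (∃ f : HardyH2 n, f ≠ 0 ∧
        adjoint MΦ f = (starRingEnd ℂ z₁) • f ∧ adjoint MΨ f = (starRingEnd ℂ z₂) • f)
      ↔ (∃ v : EuclideanSpace ℂ (Fin n), v ≠ 0 ∧
          Φ (z₁ * z₂) v = z₁ • v ∧ Ψ (z₁ * z₂) v = z₂ • v) := by
  have hw : ‖z₁ * z₂‖ < 1 := by
    rw [norm_mul]
    calc ‖z₁‖ * ‖z₂‖ ≤ ‖z₁‖ * 1 := mul_le_mul_of_nonneg_left hz₂.le (norm_nonneg _)
      _ = ‖z₁‖ := mul_one _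
      _ < 1 := hz₁
  obtain ⟨hΦΨ, hΨΦ⟩ := hprod (z₁ * z₂) (mem_ball_of_norm hw)
  constructor
  · rintro ⟨f, hf0, hfΦ, hfΨ⟩
    have hrec : ∀ k : ℕ, f (k + 1) = conj (z₁ * z₂) • f k := by
      intro k
      refine ext_inner_right ℂ (fun u => ?_)
      have hsingle : MΦ (MΨ (lp.single 2 k u)) = lp.single 2 (k + 1) u := by
        refine eq_of_evalH2_eq (fun z hz => ?_)
        rw [hMΦ _ z (mem_ball_of_norm hz), hMΨ _ z (mem_ball_of_norm hz),
          evalH2_single, evalH2_single]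
        have hcz := congrArg (fun T : EuclideanSpace ℂ (Fin n) →L[ℂ] EuclideanSpace ℂ (Fin n)
            => T (z ^ k • u)) (hprod z (mem_ball_of_norm hz)).1
        simp only [comp_apply, smul_apply, ContinuousLinearMap.one_apply] at hcz
        rw [hcz, smul_smul, ← pow_succ']
      have lhs : ⟪f, MΦ (MΨ (lp.single 2 k u))⟫_ℂ = ⟪f (k + 1), u⟫_ℂ := by
        rw [hsingle, lp.inner_single_right]
      have rhs : ⟪f, MΦ (MΨ (lp.single 2 k u))⟫_ℂ = (z₁ * z₂) * ⟪f k, u⟫_ℂ := by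
        rw [← adjoint_inner_left MΦ, hfΦ, inner_smul_left, Complex.conj_conj,
          ← adjoint_inner_left MΨ, hfΨ, inner_smul_left, Complex.conj_conj,
          lp.inner_single_right]
        ring
      rw [inner_smul_left, Complex.conj_conj, ← lhs, rhs]
    have hcoef : ∀ k : ℕ, f k = (conj (z₁ * z₂)) ^ k • f 0 := by
      intro k
      induction k with
      | zero => simp
      | succ k ih => rw [hrec k, ih, smul_smul, ← pow_succ']
    have hx0 : f 0 ≠ 0 := by
      intro h0
      apply hf0
      apply lp.ext
      funext k
      rw [lp.coeFn_zero, Pi.zero_apply]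
      show f k = 0
      rw [hcoef k, h0, smul_zero]
    have hfk : f = kernElem (z₁ * z₂) hw (f 0) := by
      apply lp.ext
      funext k
      rw [kernElem_apply]
      exact hcoef k
    have hΦx : adjoint (Φ (z₁ * z₂)) (f 0) = conj z₁ • f 0 := by
      have h1 : adjoint MΦ f = kernElem (z₁ * z₂) hw (adjoint (Φ (z₁ * z₂)) (f 0)) := by
        conv_lhs => rw [hfk]
        exact adjoint_apply_kernElem Φ MΦ hMΦ hw (f 0)
      have h2 : adjoint MΦ f = kernElem (z₁ * z₂) hw (conj z₁ • f 0) := by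
        rw [kernElem_smul, ← hfk, hfΦ]
      have h3 := h1.symm.trans h2
      have h0 := congrArg (fun g : HardyH2 n => (g : ∀ _ : ℕ, EuclideanSpace ℂ (Fin n)) 0) h3
      simpa [kernElem_apply] using h0
    have hΨx : adjoint (Ψ (z₁ * z₂)) (f 0) = conj z₂ • f 0 := by
      have h1 : adjoint MΨ f = kernElem (z₁ * z₂) hw (adjoint (Ψ (z₁ * z₂)) (f 0)) := by
        conv_lhs => rw [hfk]
        exact adjoint_apply_kernElem Ψ MΨ hMΨ hw (f 0)
      have h2 : adjoint MΨ f = kernElem (z₁ * z₂) hw (conj z₂ • f 0) := by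
        rw [kernElem_smul, ← hfk, hfΨ]
      have h3 := h1.symm.trans h2
      have h0 := congrArg (fun g : HardyH2 n => (g : ∀ _ : ℕ, EuclideanSpace ℂ (Fin n)) 0) h3
      simpa [kernElem_apply] using h0
    have hAB : adjoint (Φ (z₁ * z₂)) ∘L adjoint (Ψ (z₁ * z₂))
        = (conj z₁ * conj z₂) • 1 := by
      rw [← adjoint_comp, hΨΦ, adjoint_smul_one, ← map_mul]
    have hBA : adjoint (Ψ (z₁ * z₂)) ∘L adjoint (Φ (z₁ * z₂))
        = (conj z₁ * conj z₂) • 1 := by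
      rw [← adjoint_comp, hΦΨ, adjoint_smul_one, ← map_mul]
    obtain ⟨v, hv, h1, h2⟩ := joint_adjoint_eig hAB hBA hx0 hΦx hΨx
    rw [adjoint_adjoint, Complex.conj_conj] at h1
    rw [adjoint_adjoint, Complex.conj_conj] at h2
    exact ⟨v, hv, h1, h2⟩
  · rintro ⟨v, hv, h1, h2⟩
    obtain ⟨x, hx, hΦx, hΨx⟩ := joint_adjoint_eig hΦΨ hΨΦ hv h1 h2
    refine ⟨kernElem (z₁ * z₂) hw x, ?_, ?_, ?_⟩
    · intro h0
      apply hx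
      have := congrArg (fun g : HardyH2 n => (g : ∀ _ : ℕ, EuclideanSpace ℂ (Fin n)) 0) h0
      simpa [kernElem_apply] using this
    · rw [adjoint_apply_kernElem Φ MΦ hMΦ hw x, hΦx, kernElem_smul]
    · rw [adjoint_apply_kernElem Ψ MΨ hMΨ hw x, hΨx, kernElem_smul]

end
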